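/- arXiv:2310.17736 — 5 statements merged into one kernel-verified Lean document; each statement's English description precedes it below -/
import Mathlib

section
/- Let d ≥ 1. There exists a constant C > 0, depending only on d, such that for all σ > 0 and all R > 0: ∫_{{y ∈ ℝ^d : |y| ≥ R}} ( |y|²/σ⁴ − d/σ² )² · (π σ²)^(−d) · e^(−|y|²/σ²) dy ≤ C · σ^(−d−3) · R^(−1) · e^(−R²/(2σ²)). -/
open MeasureTheory
open Real Set

lemma aux_int_abs {a : ℝ} (ha : 0 < a) : Integrable fun x : ℝ => Real.exp (-(a * |x|)) := by
  have hIoi : IntegrableOn (fun x : ℝ => Real.exp (-(a * |x|))) (Ioi 0) := by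
    refine (exp_neg_integrableOn_Ioi 0 ha).congr_fun (fun x hx => ?_) measurableSet_Ioi
    rw [abs_of_pos hx]; simp only [neg_mul]
  have hIic : IntegrableOn (fun x : ℝ => Real.exp (-(a * |x|))) (Iic 0) := by
    rw [← Measure.map_neg_eq_self (volume : Measure ℝ)]
    have m : MeasurableEmbedding fun x : ℝ => -x := (Homeomorph.neg ℝ).measurableEmbedding
    rw [m.integrableOn_map_iff]
    simp_rw [Function.comp_def, abs_neg, neg_preimage, neg_Iic, neg_zero]
    exact Iff.mpr integrableOn_Ici_iff_integrableOn_Ioi hIoi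
  have := hIic.union hIoi
  rwa [Iic_union_Ioi, integrableOn_univ] at this

lemma aux_integral_abs {a : ℝ} (ha : 0 < a) :
    (∫ x : ℝ, Real.exp (-(a * |x|))) = 2 / a := by
  rw [integral_comp_abs (f := fun x => Real.exp (-(a * x)))]
  have : ∀ x ∈ Ioi (0:ℝ), Real.exp (-(a * x)) = Real.exp (-a * x ^ (1:ℝ)) := by
    intro x hx; rw [Real.rpow_one]; ring_nf
  rw [setIntegral_congr_fun measurableSet_Ioi this, integral_exp_neg_mul_rpow zero_lt_one ha]
  norm_num [Real.Gamma_two, Real.rpow_neg_one]; ring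

lemma aux_poly (d : ℕ) {x : ℝ} (hx : 0 ≤ x) :
    (x - d)^2 * Real.exp (-(x/4)) ≤ 2*(d:ℝ)^2 + 128 := by
  have h1 : x/8 + 1 ≤ Real.exp (x/8) := Real.add_one_le_exp _
  have hsq : Real.exp (x/4) = Real.exp (x/8)^2 := by
    rw [← Real.exp_nat_mul]; ring_nf
  have hF : x^2/64 ≤ Real.exp (x/4) := by nlinarith [Real.exp_pos (x/8)]
  have hE0 : 0 < Real.exp (-(x/4)) := Real.exp_pos _
  have hEF : Real.exp (-(x/4)) * Real.exp (x/4) = 1 := by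
    rw [← Real.exp_add]; simp
  have hE1 : Real.exp (-(x/4)) ≤ 1 := by rw [Real.exp_le_one_iff]; linarith
  have hd0 : (0:ℝ) ≤ d := Nat.cast_nonneg d
  nlinarith [mul_le_mul_of_nonneg_right hF hE0.le,
    mul_nonneg (mul_nonneg hd0 hx) hE0.le, sq_nonneg (x - d),
    mul_le_mul_of_nonneg_left hE1 (mul_nonneg hd0 hd0)]

set_option maxHeartbeats 2000000 in
/-- tail estimate for the squared Laplacian of the L¹-normalized Gaussian. -/
theorem stmt4 (d : ℕ) (hd : 1 ≤ d) :
    ∃ C : ℝ, 0 < C ∧ ∀ σ R : ℝ, 0 < σ → 0 < R →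
      (∫ y in {y : EuclideanSpace ℝ (Fin d) | R ≤ ‖y‖},
          (‖y‖^2 / σ^4 - d / σ^2)^2 * (Real.pi * σ^2) ^ (-(d : ℝ)) * Real.exp (-(‖y‖^2 / σ^2)))
        ≤ C * σ ^ (-(d : ℝ) - 3) * R⁻¹ * Real.exp (-(R^2 / (2 * σ^2))) := by
  haveI : NeZero d := ⟨Nat.one_le_iff_ne_zero.mp hd⟩
  have hπ : (0:ℝ) < Real.pi := Real.pi_pos
  refine ⟨16 * (2*(d:ℝ)^2 + 128) * ((Real.pi : ℝ)^d)⁻¹ * (Real.sqrt (8*Real.pi))^(d-1),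
    by positivity, fun σ R hσ hR => ?_⟩
  set a : ℝ := R / (8*σ^2) with ha_def
  set b : ℝ := 1 / (8*σ^2) with hb_def
  have hσ2 : (0:ℝ) < σ^2 := by positivity
  have ha : 0 < a := by positivity
  have hb : 0 < b := by positivity
  set f : Fin d → ℝ → ℝ :=
    fun i t => if i = 0 then Real.exp (-(a * |t|)) else Real.exp (-b * t^2) with hf_def
  set K : ℝ := (2*(d:ℝ)^2 + 128)/σ^4 * ((Real.pi*σ^2)^d)⁻¹ * Real.exp (-(R^2/(2*σ^2)))
    with hK_def
  have hK0 : 0 < K := by positivity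
  -- rpow rewrites
  have hrpow : (Real.pi * σ^2) ^ (-(d : ℝ)) = ((Real.pi*σ^2)^d)⁻¹ := by
    rw [Real.rpow_neg (by positivity), Real.rpow_natCast]
  have hrpow2 : σ ^ (-(d : ℝ) - 3) = ((σ:ℝ)^(d+3))⁻¹ := by
    rw [show (-(d:ℝ)-3) = -((d+3 : ℕ) : ℝ) by push_cast; ring,
      Real.rpow_neg hσ.le, Real.rpow_natCast]
  simp_rw [hrpow, hrpow2]
  -- norm squared as sum
  have hnorm : ∀ y : EuclideanSpace ℝ (Fin d), ‖y‖^2 = ∑ i, (y i)^2 := by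
    intro y
    rw [EuclideanSpace.norm_eq, Real.sq_sqrt (by positivity)]
    simp [Real.norm_eq_abs, sq_abs]
  -- pointwise bound
  have hpt : ∀ y : EuclideanSpace ℝ (Fin d), R ≤ ‖y‖ →
      (‖y‖^2 / σ^4 - d / σ^2)^2 * ((Real.pi*σ^2)^d)⁻¹ * Real.exp (-(‖y‖^2 / σ^2))
        ≤ K * ∏ i, f i (y i) := by
    intro y hy
    have hn0 : 0 < ‖y‖ := lt_of_lt_of_le hR hy
    set n : ℝ := ‖y‖
    -- product form
    have hprod : (∏ i, f i (y i))
        = Real.exp (-(a * |y 0|)) * Real.exp (-b * ∑ i ∈ Finset.univ.erase 0, (y i)^2) := by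
      rw [← Finset.mul_prod_erase Finset.univ _ (Finset.mem_univ (0 : Fin d))]
      have h01 : f 0 (y 0) = Real.exp (-(a * |y 0|)) := by simp [hf_def]
      have h02 : ∏ i ∈ Finset.univ.erase 0, f i (y i)
          = Real.exp (-b * ∑ i ∈ Finset.univ.erase 0, (y i)^2) := by
        rw [Finset.mul_sum, Real.exp_sum]
        exact Finset.prod_congr rfl fun i hi => by
          rw [hf_def]; simp only [neg_mul]
          rw [if_neg (Finset.ne_of_mem_erase hi)]
      rw [h01, h02]
    rw [hprod]
    set S' : ℝ := ∑ i ∈ Finset.univ.erase 0, (y i)^2 with hS'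
    have hS'le : S' ≤ n^2 := by
      rw [hnorm y]
      exact Finset.sum_le_sum_of_subset_of_nonneg (Finset.erase_subset _ _)
        (fun i _ _ => sq_nonneg _)
    have hy0 : |y 0| ≤ n := by
      have h1 : (y 0)^2 ≤ n^2 := by
        rw [hnorm y]
        exact Finset.single_le_sum (fun i _ => sq_nonneg (y i)) (Finset.mem_univ 0)
      calc |y 0| = Real.sqrt ((y 0)^2) := (Real.sqrt_sq_eq_abs _).symm
        _ ≤ Real.sqrt (n^2) := Real.sqrt_le_sqrt h1
        _ = n := Real.sqrt_sq hn0.le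
    -- split exp
    have hx0 : 0 ≤ n^2/σ^2 := by positivity
    have h2 : (n^2/σ^4 - d/σ^2)^2 * Real.exp (-((n^2/σ^2)/4)) ≤ (2*(d:ℝ)^2+128)/σ^4 := by
      have heq : (n^2/σ^4 - d/σ^2)^2 = (n^2/σ^2 - d)^2 / (σ^2)^2 := by
        field_simp
      rw [heq]
      calc (n^2/σ^2 - d)^2 / (σ^2)^2 * Real.exp (-((n^2/σ^2)/4))
          = ((n^2/σ^2 - d)^2 * Real.exp (-((n^2/σ^2)/4))) / σ^4 := by ring
        _ ≤ (2*(d:ℝ)^2+128)/σ^4 := by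
            apply div_le_div_of_nonneg_right ?_ (by positivity)
            exact aux_poly d hx0
    have h3 : Real.exp (-(3*(n^2/σ^2)/4))
        ≤ Real.exp (-(R^2/(2*σ^2)) + (-(a * |y 0|)) + (-b * S')) := by
      rw [Real.exp_le_exp]
      have hA : R^2 ≤ n^2 := by nlinarith
      have hB : R * |y 0| ≤ n^2 := by nlinarith [abs_nonneg (y 0)]
      rw [ha_def, hb_def]
      rw [show -(R^2/(2*σ^2)) + (-(R/(8*σ^2) * |y 0|)) + (-(1/(8*σ^2)) * S')
          = -((R^2/2 + R*|y 0|/8 + S'/8) / σ^2) by field_simp; ring,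
        show -(3*(n^2/σ^2)/4) = -((3*n^2/4)/σ^2) by ring, neg_le_neg_iff,
        div_le_div_iff_of_pos_right hσ2]
      linarith
    have hesplit : Real.exp (-(n^2/σ^2))
        = Real.exp (-((n^2/σ^2)/4)) * Real.exp (-(3*(n^2/σ^2)/4)) := by
      rw [← Real.exp_add]; ring_nf
    have hKform : K * (Real.exp (-(a * |y 0|)) * Real.exp (-b * S'))
        = (2*(d:ℝ)^2+128)/σ^4 * ((Real.pi*σ^2)^d)⁻¹
          * Real.exp (-(R^2/(2*σ^2)) + (-(a * |y 0|)) + (-b * S')) := by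
      rw [hK_def, Real.exp_add, Real.exp_add]; ring
    calc (n^2 / σ^4 - d / σ^2)^2 * ((Real.pi*σ^2)^d)⁻¹ * Real.exp (-(n^2 / σ^2))
        = ((n^2/σ^4 - d/σ^2)^2 * Real.exp (-((n^2/σ^2)/4))) * ((Real.pi*σ^2)^d)⁻¹
          * Real.exp (-(3*(n^2/σ^2)/4)) := by rw [hesplit]; ring
      _ ≤ ((2*(d:ℝ)^2+128)/σ^4) * ((Real.pi*σ^2)^d)⁻¹
          * Real.exp (-(R^2/(2*σ^2)) + (-(a * |y 0|)) + (-b * S')) := by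
          have hP : (0:ℝ) ≤ ((Real.pi*σ^2)^d)⁻¹ := by positivity
          gcongr
      _ = K * (Real.exp (-(a * |y 0|)) * Real.exp (-b * S')) := hKform.symm
  -- measurability
  have hS : MeasurableSet {y : EuclideanSpace ℝ (Fin d) | R ≤ ‖y‖} :=
    measurableSet_le measurable_const measurable_norm
  -- integrability of factors
  have hfi : ∀ i, Integrable (f i) := by
    intro i
    rw [hf_def]
    by_cases h : i = 0
    · simpa [h] using aux_int_abs ha
    · simpa [h] using integrable_exp_neg_mul_sq hb
  have hmp := EuclideanSpace.volume_preserving_symm_measurableEquiv_toLp (Fin d)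
  have hFint : Integrable (fun y : EuclideanSpace ℝ (Fin d) => ∏ i, f i (y i)) := by
    have h1 : Integrable (fun x : Fin d → ℝ => ∏ i, f i (x i)) := Integrable.fintype_prod hfi
    exact (hmp.integrable_comp_emb
      (MeasurableEquiv.measurableEmbedding _)).mpr h1
  have hIval : (∫ y : EuclideanSpace ℝ (Fin d), ∏ i, f i (y i))
      = (2/a) * (Real.sqrt (Real.pi/b))^(d-1) := by
    have h1 : (∫ y : EuclideanSpace ℝ (Fin d), ∏ i, f i (y i))
        = ∫ x : Fin d → ℝ, ∏ i, f i (x i) :=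
      hmp.integral_comp (MeasurableEquiv.measurableEmbedding _)
        (fun x : Fin d → ℝ => ∏ i, f i (x i))
    rw [h1, MeasureTheory.integral_fintype_prod_volume_eq_prod]
    rw [← Finset.mul_prod_erase Finset.univ _ (Finset.mem_univ (0 : Fin d))]
    have e0 : (∫ t, f 0 t) = 2/a := by
      have : f 0 = fun t => Real.exp (-(a * |t|)) := by rw [hf_def]; simp
      rw [this]; exact aux_integral_abs ha
    have erest : ∏ i ∈ Finset.univ.erase 0, (∫ t, f i t)
        = (Real.sqrt (Real.pi/b))^(d-1) := by
      have hc : ∀ i ∈ Finset.univ.erase (0 : Fin d),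
          (∫ t, f i t) = Real.sqrt (Real.pi/b) := by
        intro i hi
        have : f i = fun t => Real.exp (-b * t^2) := by
          rw [hf_def]; simp [Finset.ne_of_mem_erase hi]
        rw [this]; exact integral_gaussian b
      rw [Finset.prod_congr rfl hc, Finset.prod_const,
        Finset.card_erase_of_mem (Finset.mem_univ _), Finset.card_univ, Fintype.card_fin]
    rw [e0, erest]
  have step1 : (∫ y in {y : EuclideanSpace ℝ (Fin d) | R ≤ ‖y‖},
        (‖y‖^2 / σ^4 - d / σ^2)^2 * ((Real.pi*σ^2)^d)⁻¹ * Real.exp (-(‖y‖^2 / σ^2)))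
      ≤ ∫ y : EuclideanSpace ℝ (Fin d), K * ∏ i, f i (y i) := by
    rw [← integral_indicator hS]
    refine integral_mono_of_nonneg (Filter.Eventually.of_forall ?_)
      (hFint.const_mul K) (Filter.Eventually.of_forall ?_)
    · intro y
      apply Set.indicator_nonneg
      intro z hz
      positivity
    · intro y
      by_cases hy : y ∈ {y : EuclideanSpace ℝ (Fin d) | R ≤ ‖y‖}
      · rw [Set.indicator_of_mem hy]
        exact hpt y hy
      · rw [Set.indicator_of_notMem hy]
        have : (0:ℝ) ≤ ∏ i, f i (y i) :=
          Finset.prod_nonneg fun i _ => by rw [hf_def]; dsimp only; split <;> positivity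
        positivity
  have step2 : (∫ y : EuclideanSpace ℝ (Fin d), K * ∏ i, f i (y i))
      = K * ((2/a) * (Real.sqrt (Real.pi/b))^(d-1)) := by
    rw [integral_const_mul, hIval]
  refine le_trans (le_trans step1 (le_of_eq step2)) (le_of_eq ?_)
  -- final arithmetic
  have hsb : Real.sqrt (Real.pi/b) = Real.sqrt (8*Real.pi) * σ := by
    rw [hb_def, show Real.pi/(1/(8*σ^2)) = (8*Real.pi)*σ^2 by field_simp,
      Real.sqrt_mul (by positivity), Real.sqrt_sq hσ.le]
  have h2a : 2/a = 16*σ^2/R := by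
    rw [ha_def]; field_simp; ring
  rw [hK_def, hsb, h2a, mul_pow]
  obtain ⟨m, rfl⟩ := Nat.exists_eq_add_of_le hd
  simp only [Nat.add_sub_cancel_left]
  have hπne : Real.pi ≠ 0 := ne_of_gt hπ
  have hσne : σ ≠ 0 := ne_of_gt hσ
  have hRne : R ≠ 0 := ne_of_gt hR
  field_simp
  ring
end

section
/- Let d ≥ 1 and let n > d be an integer. There exists a constant C > 0, depending only on n and d, such that for all σ ∈ (0,1], all t ∈ ℝ and all x, y ∈ ℝ^d: ∫_{ℝ^d} G_{n,t}(|y−z|) · (π σ²)^(−d) · e^(−|z−x|²/σ²) dz ≤ C · σ^(−d) · G_{n,t}(|y−x|). -/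
open MeasureTheory

/-- The polynomially decaying function `G_{n,t}(r) = min(1, ⟨t⟩ⁿ/rⁿ)` (with value `1` at `r = 0`). -/
noncomputable def G (n : ℕ) (t r : ℝ) : ℝ :=
  if r = 0 then 1 else min 1 (Real.sqrt (1 + t^2) ^ n / r ^ n)

lemma one_le_K (t : ℝ) : 1 ≤ Real.sqrt (1 + t^2) := by
  rw [Real.one_le_sqrt]
  nlinarith

lemma G_le_one (n : ℕ) (t r : ℝ) : G n t r ≤ 1 := by
  unfold G; split
  · exact le_refl 1
  · exact min_le_left _ _

lemma G_nonneg (n : ℕ) (t : ℝ) {r : ℝ} (hr : 0 ≤ r) : 0 ≤ G n t r := by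
  unfold G; split
  · norm_num
  · next h =>
    have hr0 : 0 < r := lt_of_le_of_ne hr (Ne.symm h)
    have hK : 0 ≤ Real.sqrt (1 + t^2) := Real.sqrt_nonneg _
    exact le_min (by norm_num) (by positivity)

lemma G_half (n : ℕ) (t : ℝ) {a r : ℝ} (ha : 0 ≤ a) (hr : a/2 ≤ r) :
    G n t r ≤ 2^n * G n t a := by
  have h2 : (1:ℝ) ≤ 2^n := one_le_pow₀ (by norm_num)
  rcases eq_or_lt_of_le ha with h0 | ha0
  · have hGa : G n t a = 1 := by simp [G, ← h0]
    rw [hGa, mul_one]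
    exact (G_le_one n t r).trans h2
  · have hr0 : 0 < r := lt_of_lt_of_le (by linarith) hr
    have hK : 0 ≤ Real.sqrt (1 + t^2) := Real.sqrt_nonneg _
    rw [G, if_neg hr0.ne', G, if_neg ha0.ne']
    have hpow : (0:ℝ) < (a/2)^n := by positivity
    have hle : (a/2)^n ≤ r^n := pow_le_pow_left₀ (by linarith) hr n
    have key : Real.sqrt (1+t^2)^n / r^n ≤ 2^n * (Real.sqrt (1+t^2)^n / a^n) := by
      have h1 : Real.sqrt (1+t^2)^n / r^n ≤ Real.sqrt (1+t^2)^n / (a/2)^n := by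
        gcongr

      have heq : Real.sqrt (1+t^2)^n / (a/2)^n = 2^n * (Real.sqrt (1+t^2)^n / a^n) := by
        rw [div_pow]
        field_simp
      linarith [h1, heq.le, heq.ge]
    calc min 1 (Real.sqrt (1+t^2)^n / r^n)
        ≤ min (2^n * 1) (2^n * (Real.sqrt (1+t^2)^n / a^n)) :=
          min_le_min (by linarith) key
      _ = 2^n * min 1 (Real.sqrt (1+t^2)^n / a^n) := by
          rw [mul_min_of_nonneg _ _ (by positivity : (0:ℝ) ≤ 2^n)]

lemma exp_le_G (n : ℕ) (t σ a : ℝ) (hσ : 0 < σ) (hσ1 : σ ≤ 1) (ha : 0 ≤ a) :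
    Real.exp (-(a^2/(8*σ^2))) ≤ (n.factorial * 8^n) * G n t a := by
  have hK : 1 ≤ Real.sqrt (1 + t^2) := one_le_K t
  have hfac : (1:ℝ) ≤ n.factorial * 8^n := by
    have h1 : (1:ℝ) ≤ n.factorial := by exact_mod_cast n.factorial_pos
    have h2 : (1:ℝ) ≤ 8^n := one_le_pow₀ (by norm_num)
    nlinarith
  have hexp1 : Real.exp (-(a^2/(8*σ^2))) ≤ 1 := by
    apply Real.exp_le_one_iff.mpr
    have : 0 ≤ a^2/(8*σ^2) := by positivity
    linarith
  rcases eq_or_lt_of_le ha with h0 | ha0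
  · have hGa : G n t a = 1 := by simp [G, ← h0]
    rw [hGa, mul_one]; exact hexp1.trans hfac
  rw [G, if_neg ha0.ne']
  have hKn : (1:ℝ) ≤ Real.sqrt (1+t^2)^n := one_le_pow₀ hK
  by_cases h1 : a ≤ 1
  · have hx : (1:ℝ) ≤ Real.sqrt (1+t^2)^n / a^n := by
      rw [le_div_iff₀ (by positivity)]
      have : a^n ≤ 1 := pow_le_one₀ ha h1
      nlinarith
    rw [min_eq_left hx, mul_one]
    exact hexp1.trans hfac
  · push_neg at h1
    have han : (1:ℝ) ≤ a^n := one_le_pow₀ h1.le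
    have hmin : (1:ℝ)/a^n ≤ min 1 (Real.sqrt (1+t^2)^n / a^n) := by
      apply le_min
      · rw [div_le_one (by positivity)]; exact han
      · gcongr
    have key : Real.exp (-(a^2/(8*σ^2))) ≤ (n.factorial * 8^n) * (1/a^n) := by
      set u : ℝ := a^2/(8*σ^2) with hu
      have hu0 : 0 < u := by positivity
      have hpe : u^n / n.factorial ≤ Real.exp u := Real.pow_div_factorial_le_exp u hu0.le n
      have hef : 0 < u^n / (n.factorial : ℝ) := by positivity
      have h2 : Real.exp (-u) ≤ n.factorial / u^n := by
        rw [Real.exp_neg]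
        calc (Real.exp u)⁻¹ ≤ (u^n / n.factorial)⁻¹ := by
              apply inv_anti₀ hef hpe
          _ = n.factorial / u^n := by rw [inv_div]
      have h3 : (n.factorial : ℝ)/u^n ≤ (n.factorial * 8^n) * (1/a^n) := by
        have hu_eq : u^n = (a^2)^n / (8*σ^2)^n := by rw [hu, div_pow]
        rw [hu_eq, div_div_eq_mul_div, mul_one_div]
        apply div_le_div₀ (by positivity) ?_ (by positivity) ?_
        · have h8 : (8*σ^2)^n ≤ 8^n := pow_le_pow_left₀ (by positivity) (by nlinarith) n
          exact mul_le_mul_of_nonneg_left h8 (by positivity)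
        · exact pow_le_pow_left₀ (by linarith) (by nlinarith) n
      exact h2.trans h3
    calc Real.exp (-(a^2/(8*σ^2))) ≤ (n.factorial * 8^n) * (1/a^n) := key
      _ ≤ (n.factorial * 8^n) * min 1 (Real.sqrt (1+t^2)^n / a^n) := by
          apply mul_le_mul_of_nonneg_left hmin (by positivity)

lemma gauss_integrable (d : ℕ) {b : ℝ} (hb : 0 < b) (x : EuclideanSpace ℝ (Fin d)) :
    Integrable (fun z : EuclideanSpace ℝ (Fin d) => Real.exp (-b * ‖z - x‖^2)) := by
  have h := (GaussianFourier.integrable_cexp_neg_mul_sq_norm_add (V := EuclideanSpace ℝ (Fin d))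
      (b := (b:ℂ)) (by simpa using hb) 0 0).norm
  have h2 : Integrable (fun v : EuclideanSpace ℝ (Fin d) => Real.exp (-b * ‖v‖^2)) := by
    convert h using 2 with v
    simp [Complex.norm_exp]
    left
    norm_cast
  exact h2.comp_sub_right x

lemma gauss_integral (d : ℕ) {b : ℝ} (hb : 0 < b) (x : EuclideanSpace ℝ (Fin d)) :
    ∫ z : EuclideanSpace ℝ (Fin d), Real.exp (-b * ‖z - x‖^2)
      = (Real.pi / b) ^ ((d:ℝ) / 2) := by
  rw [integral_sub_right_eq_self (fun v : EuclideanSpace ℝ (Fin d) => Real.exp (-b * ‖v‖^2)) x]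
  rw [GaussianFourier.integral_rexp_neg_mul_sq_norm hb]
  norm_num [finrank_euclideanSpace_fin]

/-- convolution of `G_{n,t}` with a squared shifted Gaussian. -/
theorem stmt8 (d n : ℕ) (hd : 1 ≤ d) (hn : d < n) :
    ∃ C : ℝ, 0 < C ∧ ∀ σ : ℝ, 0 < σ → σ ≤ 1 → ∀ (t : ℝ) (x y : EuclideanSpace ℝ (Fin d)),
      (∫ z, G n t ‖y - z‖ * ((Real.pi * σ^2) ^ (-(d : ℝ)) * Real.exp (-(‖z - x‖^2 / σ^2))))
        ≤ C * σ ^ (-(d : ℝ)) * G n t ‖y - x‖ := by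
  refine ⟨2^n + 2^d * n.factorial * 8^n, by positivity, ?_⟩
  intro σ hσ hσ1 t x y
  have hπ := Real.pi_pos
  have hπ1 : (1:ℝ) ≤ Real.pi := by nlinarith [Real.pi_gt_three]
  set a := ‖y - x‖ with ha_def
  have ha : 0 ≤ a := norm_nonneg _
  set A : ℝ := (Real.pi * σ^2) ^ (-(d : ℝ)) with hA_def
  have hπσ : (0:ℝ) < Real.pi * σ^2 := by positivity
  have hA0 : 0 < A := Real.rpow_pos_of_pos hπσ _
  have hGa0 : 0 ≤ G n t a := G_nonneg n t ha
  have hb1 : (0:ℝ) < 1/σ^2 := by positivity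
  have hb2 : (0:ℝ) < 1/(2*σ^2) := by positivity
  have int1 := gauss_integrable d hb1 x
  have int2 := gauss_integrable d hb2 x
  set e : ℝ := Real.exp (-(a^2/(8*σ^2))) with he_def
  have he0 : 0 < e := Real.exp_pos _
  set g : EuclideanSpace ℝ (Fin d) → ℝ := fun z =>
    (2^n * G n t a * A) * Real.exp (-(1/σ^2) * ‖z - x‖^2)
    + (A * e) * Real.exp (-(1/(2*σ^2)) * ‖z - x‖^2) with hg_def
  have hg_int : Integrable g := (int1.const_mul _).add (int2.const_mul _)
  have hpoint : ∀ z, G n t ‖y - z‖ * (A * Real.exp (-(‖z - x‖^2 / σ^2))) ≤ g z := by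
    intro z
    have heq : Real.exp (-(‖z - x‖^2 / σ^2)) = Real.exp (-(1/σ^2) * ‖z - x‖^2) := by
      congr 1; field_simp
    have htri : a ≤ ‖y - z‖ + ‖z - x‖ := by
      calc a = ‖(y - z) + (z - x)‖ := by rw [ha_def]; congr 1; abel
        _ ≤ ‖y - z‖ + ‖z - x‖ := norm_add_le _ _
    have hGz0 : 0 ≤ G n t ‖y - z‖ := G_nonneg n t (norm_nonneg _)
    by_cases hz : a/2 ≤ ‖y - z‖
    · have h1 : G n t ‖y - z‖ ≤ 2^n * G n t a := G_half n t ha hz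
      have step : G n t ‖y - z‖ * (A * Real.exp (-(‖z - x‖^2 / σ^2)))
          ≤ (2^n * G n t a * A) * Real.exp (-(1/σ^2) * ‖z - x‖^2) := by
        rw [heq, ← mul_assoc]
        apply mul_le_mul_of_nonneg_right _ (Real.exp_nonneg _)
        exact mul_le_mul_of_nonneg_right h1 hA0.le
      refine step.trans (le_add_of_nonneg_right ?_)
      positivity
    · push_neg at hz
      have hz2 : a/2 ≤ ‖z - x‖ := by linarith
      have hsq : a^2/4 ≤ ‖z - x‖^2 := by nlinarith [norm_nonneg (z - x)]
      have hexp : Real.exp (-(‖z - x‖^2 / σ^2)) ≤ e * Real.exp (-(1/(2*σ^2)) * ‖z - x‖^2) := by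
        rw [he_def, ← Real.exp_add]
        apply Real.exp_le_exp.mpr
        have key : -(‖z - x‖^2) ≤ -(a^2/8) + -(‖z - x‖^2/2) := by linarith
        calc -(‖z - x‖^2 / σ^2) = (1/σ^2) * (-(‖z - x‖^2)) := by ring
          _ ≤ (1/σ^2) * (-(a^2/8) + -(‖z - x‖^2/2)) :=
              mul_le_mul_of_nonneg_left key (by positivity)
          _ = -(a^2/(8*σ^2)) + (-(1/(2*σ^2)) * ‖z - x‖^2) := by ring
      have step : G n t ‖y - z‖ * (A * Real.exp (-(‖z - x‖^2 / σ^2)))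
          ≤ (A * e) * Real.exp (-(1/(2*σ^2)) * ‖z - x‖^2) := by
        calc G n t ‖y - z‖ * (A * Real.exp (-(‖z - x‖^2 / σ^2)))
            ≤ 1 * (A * Real.exp (-(‖z - x‖^2 / σ^2))) :=
              mul_le_mul_of_nonneg_right (G_le_one n t _) (by positivity)
          _ = A * Real.exp (-(‖z - x‖^2 / σ^2)) := one_mul _
          _ ≤ A * (e * Real.exp (-(1/(2*σ^2)) * ‖z - x‖^2)) :=
              mul_le_mul_of_nonneg_left hexp hA0.le
          _ = (A * e) * Real.exp (-(1/(2*σ^2)) * ‖z - x‖^2) := by ring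
      refine step.trans ?_
      have hpos : 0 ≤ (2^n * G n t a * A) * Real.exp (-(1/σ^2) * ‖z - x‖^2) := by positivity
      simp only [hg_def]
      linarith
  have hmono : (∫ z, G n t ‖y - z‖ * (A * Real.exp (-(‖z - x‖^2 / σ^2)))) ≤ ∫ z, g z := by
    apply integral_mono_of_nonneg
    · exact Filter.Eventually.of_forall fun z =>
        mul_nonneg (G_nonneg n t (norm_nonneg _)) (by positivity)
    · exact hg_int
    · exact Filter.Eventually.of_forall hpoint
  have hInt_g : ∫ z, g z = (2^n * G n t a * A) * (Real.pi * σ^2) ^ ((d:ℝ)/2)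
      + (A * e) * (2 * (Real.pi * σ^2)) ^ ((d:ℝ)/2) := by
    simp only [hg_def]
    rw [integral_add (int1.const_mul _) (int2.const_mul _),
        integral_const_mul, integral_const_mul, gauss_integral d hb1 x, gauss_integral d hb2 x,
        show Real.pi / (1/σ^2) = Real.pi * σ^2 by field_simp,
        show Real.pi / (1/(2*σ^2)) = 2 * (Real.pi * σ^2) by field_simp]
  have hbound1 : A * (Real.pi * σ^2) ^ ((d:ℝ)/2) ≤ σ ^ (-(d:ℝ)) := by
    have h3 : ((σ^2 : ℝ)) ^ (-((d:ℝ)/2)) = σ ^ (-(d:ℝ)) := by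
      rw [← Real.rpow_natCast σ 2, ← Real.rpow_mul hσ.le]
      norm_num
      congr 1
      ring
      rw [Real.rpow_neg hσ.le, Real.rpow_natCast, inv_pow]
    have h2 : (Real.pi * σ^2) ^ (-((d:ℝ)/2)) ≤ (σ^2 : ℝ) ^ (-((d:ℝ)/2)) := by
      apply Real.rpow_le_rpow_of_nonpos (by positivity) (by nlinarith)
      have : (0:ℝ) ≤ (d:ℝ)/2 := by positivity
      linarith
    calc A * (Real.pi * σ^2) ^ ((d:ℝ)/2)
        = (Real.pi * σ^2) ^ (-(d:ℝ) + (d:ℝ)/2) := by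
          rw [hA_def, ← Real.rpow_add hπσ]
      _ = (Real.pi * σ^2) ^ (-((d:ℝ)/2)) := by norm_num; ring_nf
      _ ≤ (σ^2 : ℝ) ^ (-((d:ℝ)/2)) := h2
      _ = σ ^ (-(d:ℝ)) := h3
  have hbound2 : A * (2 * (Real.pi * σ^2)) ^ ((d:ℝ)/2) ≤ 2^d * σ ^ (-(d:ℝ)) := by
    have hsplit : (2 * (Real.pi * σ^2)) ^ ((d:ℝ)/2)
        = (2:ℝ) ^ ((d:ℝ)/2) * (Real.pi * σ^2) ^ ((d:ℝ)/2) :=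
      Real.mul_rpow (by norm_num) hπσ.le
    have h2d : (2:ℝ) ^ ((d:ℝ)/2) ≤ 2^d := by
      rw [← Real.rpow_natCast 2 d]
      apply Real.rpow_le_rpow_of_exponent_le (by norm_num)
      have : (0:ℝ) ≤ (d:ℝ) := by positivity
      linarith
    calc A * (2 * (Real.pi * σ^2)) ^ ((d:ℝ)/2)
        = (2:ℝ) ^ ((d:ℝ)/2) * (A * (Real.pi * σ^2) ^ ((d:ℝ)/2)) := by rw [hsplit]; ring
      _ ≤ 2^d * (σ ^ (-(d:ℝ))) := by
          apply mul_le_mul h2d hbound1 (by positivity) (by positivity)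
      _ = 2^d * σ ^ (-(d:ℝ)) := rfl
  have hexpG : e ≤ (n.factorial * 8^n) * G n t a := exp_le_G n t σ a hσ hσ1 ha
  have hσd : (0:ℝ) < σ ^ (-(d:ℝ)) := Real.rpow_pos_of_pos hσ _
  calc (∫ z, G n t ‖y - z‖ * (A * Real.exp (-(‖z - x‖^2 / σ^2))))
      ≤ ∫ z, g z := hmono
    _ = (2^n * G n t a * A) * (Real.pi * σ^2) ^ ((d:ℝ)/2)
        + (A * e) * (2 * (Real.pi * σ^2)) ^ ((d:ℝ)/2) := hInt_g
    _ ≤ (2^n * G n t a) * σ ^ (-(d:ℝ))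
        + ((n.factorial * 8^n) * G n t a) * (2^d * σ ^ (-(d:ℝ))) := by
        apply add_le_add
        · rw [mul_assoc]
          exact mul_le_mul_of_nonneg_left hbound1 (by positivity)
        · calc (A * e) * (2 * (Real.pi * σ^2)) ^ ((d:ℝ)/2)
              = e * (A * (2 * (Real.pi * σ^2)) ^ ((d:ℝ)/2)) := by ring
            _ ≤ ((n.factorial * 8^n) * G n t a) * (2^d * σ ^ (-(d:ℝ))) := by
                apply mul_le_mul hexpG hbound2 (by positivity) (by positivity)
    _ = (2^n + 2^d * n.factorial * 8^n) * σ ^ (-(d:ℝ)) * G n t a := by ring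
end

section
/- Let n ∈ ℕ, let ξ : ℝ → [0,1] be (n+2)-times continuously differentiable with ξ(x) = 1 for x ≤ 0 and ξ(x) = 0 for x ≥ 1, and let α > 1. For E > 0 define g_E(x) := ξ( (x − E) / ((α−1)·E) ). Then for all E > 0 and all p > 0: Σ_{k=0}^{n+2} ∫_ℝ ⟨x⟩^(k−p−1) · |g_E^(k)(x)| dx ≤ ι_p · ‖ξ‖_∞ + Σ_{k=1}^{⌈p⌉} ‖ξ^(k)‖_∞ / ((α−1)·E)^(k−1) + Σ_{k=⌈p⌉+1}^{n+2} ( α/(α−1) )^(k−1) · ⟨E⟩^(k−p−1) · E^(−(k−1)) · ‖ξ^(k)‖_∞, where ⌈p⌉ denotes the least integer ≥ p (and the second sum is empty if ⌈p⌉ > n+2). -/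
open MeasureTheory

lemma aux_scale (ξ : ℝ → ℝ) {k : ℕ} (hξ : ContDiff ℝ k ξ) (c E : ℝ) (x : ℝ) :
    iteratedDeriv k (fun x => ξ ((x - E) / c)) x = c⁻¹ ^ k * iteratedDeriv k ξ ((x - E) / c) := by
  have h1 : (fun x => ξ ((x - E) / c)) = (fun z => (fun y => ξ (c⁻¹ * y)) (z + (-E))) := by
    funext z; simp [div_eq_inv_mul, sub_eq_add_neg]
  have h2 := congrFun (iteratedDeriv_comp_add_const k (fun y => ξ (c⁻¹ * y)) (-E)) x
  have h3 := congrFun (iteratedDeriv_comp_const_mul hξ c⁻¹) (x + -E)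
  rw [h1, h2, h3]
  simp [div_eq_inv_mul, sub_eq_add_neg]

lemma aux_vanish {s : Set ℝ} (hs : IsOpen s) {ξ : ℝ → ℝ} {c : ℝ}
    (h : Set.EqOn ξ (fun _ => c) s) {k : ℕ} (hk : k ≠ 0) {y : ℝ} (hy : y ∈ s) :
    iteratedDeriv k ξ y = 0 := by
  have h2 : iteratedFDeriv ℝ k ξ y = iteratedFDeriv ℝ k (fun _ => c) y := by
    rw [← iteratedFDerivWithin_of_isOpen k hs hy, ← iteratedFDerivWithin_of_isOpen k hs hy,
      Set.EqOn.iteratedFDerivWithin h k hy]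
  rw [iteratedDeriv_eq_iteratedFDeriv, h2, iteratedFDeriv_const_of_ne hk]
  simp

lemma aux_w_cont (e : ℝ) : Continuous (fun x : ℝ => Real.sqrt (1 + x ^ 2) ^ e) := by
  apply Continuous.rpow_const
  · exact (continuous_const.add (continuous_pow 2)).sqrt
  · intro x; left; positivity

lemma aux_term (ξ : ℝ → ℝ) (N k : ℕ) (hξ : ContDiff ℝ N ξ)
    (h0 : ∀ x ≤ 0, ξ x = 1) (h1 : ∀ x, 1 ≤ x → ξ x = 0)
    {α E : ℝ} (hα : 1 < α) (hE : 0 < E) (p : ℝ)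
    (hk1 : 1 ≤ k) (hkN : k ≤ N) (W : ℝ)
    (hW : ∀ x ∈ Set.Icc E (α * E), Real.sqrt (1 + x ^ 2) ^ ((k : ℝ) - p - 1) ≤ W) :
    ∫ x : ℝ, Real.sqrt (1 + x ^ 2) ^ ((k : ℝ) - p - 1) *
        |iteratedDeriv k (fun x => ξ ((x - E) / ((α - 1) * E))) x|
      ≤ ((α - 1) * E) * (W * ((((α - 1) * E)⁻¹) ^ k * ⨆ x, |iteratedDeriv k ξ x|)) := by
  set c : ℝ := (α - 1) * E with hcdef
  have hc : 0 < c := mul_pos (by linarith) hE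
  have hkN' : (k : WithTop ℕ∞) ≤ (N : WithTop ℕ∞) := by exact_mod_cast hkN
  have hcd : ContDiff ℝ k ξ := hξ.of_le hkN'
  have hg : ∀ x : ℝ, iteratedDeriv k (fun x => ξ ((x - E) / c)) x
      = c⁻¹ ^ k * iteratedDeriv k ξ ((x - E) / c) := aux_scale ξ hcd c E
  have hvan : ∀ y : ℝ, y < 0 ∨ 1 < y → iteratedDeriv k ξ y = 0 := by
    rintro y (hy | hy)
    · exact aux_vanish isOpen_Iio (fun z hz => h0 z (le_of_lt hz)) (by omega) hy
    · exact aux_vanish isOpen_Ioi (fun z hz => h1 z (le_of_lt hz)) (by omega) hy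
  have hcont : Continuous (iteratedDeriv k ξ) :=
    hcd.continuous_iteratedDeriv k le_rfl
  have hcs : HasCompactSupport (iteratedDeriv k ξ) := by
    apply HasCompactSupport.intro (isCompact_Icc (a := (0:ℝ)) (b := 1))
    intro y hy
    rcases lt_or_ge y 0 with h | h
    · exact hvan y (Or.inl h)
    · refine hvan y (Or.inr ?_)
      rw [Set.mem_Icc] at hy; push_neg at hy; exact hy h
  have hbdd : BddAbove (Set.range fun x => |iteratedDeriv k ξ x|) :=
    hcont.abs.bddAbove_range_of_hasCompactSupport hcs.abs
  set M : ℝ := ⨆ x, |iteratedDeriv k ξ x| with hMdef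
  have hM : ∀ y : ℝ, |iteratedDeriv k ξ y| ≤ M := fun y => le_ciSup hbdd y
  have hM0 : 0 ≤ M := (abs_nonneg _).trans (hM 0)
  have hW0 : 0 ≤ W := le_trans (by positivity) (hW E ⟨le_refl E, by nlinarith⟩)
  set F : ℝ → ℝ := fun x => Real.sqrt (1 + x ^ 2) ^ ((k : ℝ) - p - 1) *
      |iteratedDeriv k (fun x => ξ ((x - E) / c)) x| with hFdef
  have hgc : Continuous (iteratedDeriv k (fun x => ξ ((x - E) / c))) := by
    have : ContDiff ℝ k (fun x : ℝ => ξ ((x - E) / c)) :=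
      hcd.comp (ContDiff.div_const (contDiff_id.sub contDiff_const) c)
    exact this.continuous_iteratedDeriv k le_rfl
  have hFcont : Continuous F := ((aux_w_cont _).mul hgc.abs)
  have hF0 : ∀ x ∉ Set.Icc E (α * E), iteratedDeriv k (fun x => ξ ((x - E) / c)) x = 0 := by
    intro x hx
    rw [hg x]
    rw [Set.mem_Icc, not_and_or, not_le, not_le] at hx
    rcases hx with hx | hx
    · rw [hvan _ (Or.inl (div_neg_of_neg_of_pos (by linarith) hc))]; ring
    · rw [hvan _ (Or.inr (by rw [lt_div_iff₀ hc]; nlinarith))]; ring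
  have hFint : Integrable F := by
    apply hFcont.integrable_of_hasCompactSupport
    apply HasCompactSupport.intro (isCompact_Icc (a := E) (b := α * E))
    intro x hx
    simp [hFdef, hF0 x hx]
  set G : ℝ → ℝ := Set.indicator (Set.Icc E (α * E)) (fun _ => W * (c⁻¹ ^ k * M)) with hGdef
  have hGint : Integrable G := by
    rw [hGdef, integrable_indicator_iff measurableSet_Icc]
    exact integrableOn_const measure_Icc_lt_top.ne
  have hle : ∀ x, F x ≤ G x := by
    intro x
    by_cases hx : x ∈ Set.Icc E (α * E)
    · rw [hGdef, Set.indicator_of_mem hx]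
      rw [hFdef]
      simp only []
      rw [hg x, abs_mul, abs_pow, abs_inv, abs_of_pos hc]
      apply mul_le_mul (hW x hx) ?_ (by positivity) hW0
      exact mul_le_mul_of_nonneg_left (hM _) (by positivity)
    · rw [hGdef, Set.indicator_of_notMem hx, hFdef]
      simp only []
      rw [hF0 x hx]
      simp
  calc ∫ x, F x ≤ ∫ x, G x := integral_mono hFint hGint hle
    _ = ((α - 1) * E) * (W * (c⁻¹ ^ k * M)) := by
        rw [hGdef, integral_indicator_const _ measurableSet_Icc, Real.volume_real_Icc_of_le (by nlinarith), smul_eq_mul]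
        ring_nf

lemma aux_w_one_le (x : ℝ) : 1 ≤ Real.sqrt (1 + x ^ 2) := by
  have := Real.sqrt_le_sqrt (show (1:ℝ) ≤ 1 + x ^ 2 by nlinarith [sq_nonneg x])
  simpa using this

lemma aux_w_int {p : ℝ} (hp : 0 < p) :
    Integrable (fun x : ℝ => Real.sqrt (1 + x ^ 2) ^ (-p - 1)) := by
  have h := integrable_rpow_neg_one_add_norm_sq (E := ℝ) (μ := volume) (r := p + 1)
    (by simp; linarith)
  convert h using 2 with x
  rw [Real.sqrt_eq_rpow, ← Real.rpow_mul (by positivity : (0:ℝ) ≤ 1 + x ^ 2),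
    Real.norm_eq_abs, sq_abs]
  ring_nf

/-- weighted-norm bound for the scaled energy cutoff function `g_E`. -/
theorem stmt14 (n : ℕ) (ξ : ℝ → ℝ) (hmem : ∀ x, ξ x ∈ Set.Icc (0 : ℝ) 1)
    (hξ : ContDiff ℝ (n + 2 : ℕ) ξ) (h0 : ∀ x ≤ 0, ξ x = 1) (h1 : ∀ x, 1 ≤ x → ξ x = 0)
    (α : ℝ) (hα : 1 < α) (E : ℝ) (hE : 0 < E) (p : ℝ) (hp : 0 < p) :
    (∑ k ∈ Finset.range (n + 3),
        ∫ x : ℝ, Real.sqrt (1 + x^2) ^ ((k : ℝ) - p - 1) *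
          |iteratedDeriv k (fun x => ξ ((x - E) / ((α - 1) * E))) x|)
      ≤ (∫ x : ℝ, Real.sqrt (1 + x^2) ^ (-p - 1)) * (⨆ x, |ξ x|)
        + (∑ k ∈ Finset.Icc 1 ⌈p⌉₊, (⨆ x, |iteratedDeriv k ξ x|) / ((α - 1) * E) ^ (k - 1))
        + ∑ k ∈ Finset.Icc (⌈p⌉₊ + 1) (n + 2),
            (α / (α - 1)) ^ (k - 1) * Real.sqrt (1 + E^2) ^ ((k : ℝ) - p - 1) *
              E ^ (-((k : ℝ) - 1)) * ⨆ x, |iteratedDeriv k ξ x| := by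
  have hc : (0:ℝ) < (α - 1) * E := mul_pos (by linarith) hE
  set c : ℝ := (α - 1) * E with hcdef
  set g : ℝ → ℝ := fun x => ξ ((x - E) / c) with hgdef
  set T : ℕ → ℝ := fun k => ∫ x : ℝ, Real.sqrt (1 + x^2) ^ ((k : ℝ) - p - 1) *
      |iteratedDeriv k g x| with hTdef
  set M : ℕ → ℝ := fun k => ⨆ x, |iteratedDeriv k ξ x| with hMdef
  -- k = 0 term
  have hbdd0 : BddAbove (Set.range fun x => |ξ x|) := by
    refine ⟨1, ?_⟩
    rintro _ ⟨x, rfl⟩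
    have := hmem x
    rw [Set.mem_Icc] at this
    show |ξ x| ≤ 1
    rw [abs_of_nonneg this.1]; exact this.2
  have hM0 : ∀ y : ℝ, |ξ y| ≤ ⨆ x, |ξ x| := fun y => le_ciSup hbdd0 y
  have hM0n : 0 ≤ ⨆ x, |ξ x| := (abs_nonneg _).trans (hM0 0)
  have hT0 : T 0 ≤ (∫ x : ℝ, Real.sqrt (1 + x^2) ^ (-p - 1)) * (⨆ x, |ξ x|) := by
    have hRint : Integrable (fun x : ℝ => Real.sqrt (1 + x^2) ^ (-p - 1) * ⨆ x, |ξ x|) :=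
      (aux_w_int hp).mul_const _
    have hle : ∀ x : ℝ, Real.sqrt (1 + x^2) ^ (((0:ℕ) : ℝ) - p - 1) * |iteratedDeriv 0 g x|
        ≤ Real.sqrt (1 + x^2) ^ (-p - 1) * ⨆ x, |ξ x| := by
      intro x
      rw [iteratedDeriv_zero]
      simp only [Nat.cast_zero, zero_sub]
      have : -p - 1 = -p - 1 := rfl
      refine mul_le_mul ?_ (hM0 _) (abs_nonneg _) (by positivity)
      apply le_of_eq
      norm_num
    have hLcont : Continuous (fun x : ℝ => Real.sqrt (1 + x^2) ^ (((0:ℕ) : ℝ) - p - 1) *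
        |iteratedDeriv 0 g x|) := by
      simp only [iteratedDeriv_zero]
      exact (aux_w_cont _).mul ((hξ.continuous.comp
        ((continuous_id.sub continuous_const).div_const c)).abs)
    have hLint : Integrable (fun x : ℝ => Real.sqrt (1 + x^2) ^ (((0:ℕ) : ℝ) - p - 1) *
        |iteratedDeriv 0 g x|) := by
      refine hRint.mono' hLcont.aestronglyMeasurable (Filter.Eventually.of_forall fun x => ?_)
      rw [Real.norm_eq_abs, abs_of_nonneg (by positivity)]
      exact hle x
    calc T 0 ≤ ∫ x : ℝ, Real.sqrt (1 + x^2) ^ (-p - 1) * ⨆ x, |ξ x| :=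
          integral_mono hLint hRint hle
      _ = (∫ x : ℝ, Real.sqrt (1 + x^2) ^ (-p - 1)) * (⨆ x, |ξ x|) := integral_mul_const _ _
  -- case 1
  have hcase1 : ∀ k, 1 ≤ k → k ≤ n + 2 → k ≤ ⌈p⌉₊ → T k ≤ M k / c ^ (k - 1) := by
    intro k hk1 hk2 hk3
    have hneg : (k : ℝ) - p - 1 ≤ 0 := by
      have h5 : (⌈p⌉₊ : ℝ) < p + 1 := Nat.ceil_lt_add_one hp.le
      have h6 : (k : ℝ) ≤ (⌈p⌉₊ : ℝ) := by exact_mod_cast hk3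
      linarith
    have hW : ∀ x ∈ Set.Icc E (α * E), Real.sqrt (1 + x ^ 2) ^ ((k : ℝ) - p - 1) ≤ 1 :=
      fun x _ => Real.rpow_le_one_of_one_le_of_nonpos (aux_w_one_le x) hneg
    have hthis := aux_term ξ (n+2) k hξ h0 h1 hα hE p hk1 hk2 1 hW
    rw [← hcdef] at hthis
    have heq : c * (1 * (c⁻¹ ^ k * ⨆ x, |iteratedDeriv k ξ x|)) = M k / c ^ (k - 1) := by
      obtain ⟨m, rfl⟩ : ∃ m, k = m + 1 := ⟨k - 1, by omega⟩
      simp only [Nat.add_sub_cancel, one_mul, pow_succ, hMdef]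
      field_simp
      rw [mul_right_comm, ← mul_pow, one_div, inv_mul_cancel₀ hc.ne', one_pow, one_mul]
    exact hthis.trans (le_of_eq heq)
  -- case 2
  have hcase2 : ∀ k, ⌈p⌉₊ + 1 ≤ k → k ≤ n + 2 →
      T k ≤ (α / (α - 1)) ^ (k - 1) * Real.sqrt (1 + E^2) ^ ((k : ℝ) - p - 1) *
        E ^ (-((k : ℝ) - 1)) * M k := by
    intro k hk1 hk2
    have hk1' : 1 ≤ k := by omega
    have he : 0 ≤ (k : ℝ) - p - 1 := by
      have h5 : p ≤ (⌈p⌉₊ : ℝ) := Nat.le_ceil p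
      have h6 : ((⌈p⌉₊ : ℕ) : ℝ) + 1 ≤ (k : ℝ) := by exact_mod_cast hk1
      linarith
    set e : ℝ := (k : ℝ) - p - 1 with hedef
    set W : ℝ := Real.sqrt (1 + (α * E) ^ 2) ^ e with hWdef
    have hW : ∀ x ∈ Set.Icc E (α * E), Real.sqrt (1 + x ^ 2) ^ ((k : ℝ) - p - 1) ≤ W := by
      intro x hx
      rw [Set.mem_Icc] at hx
      exact Real.rpow_le_rpow (Real.sqrt_nonneg _)
        (Real.sqrt_le_sqrt (by nlinarith [hx.1, hx.2])) he
    have hbT := aux_term ξ (n+2) k hξ h0 h1 hα hE p hk1' hk2 W hW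
    set s : ℝ := Real.sqrt (1 + E ^ 2) with hsdef
    have hs0 : 0 ≤ s := Real.sqrt_nonneg _
    have hWle : W ≤ α ^ (k - 1) * s ^ e := by
      have hs1 : Real.sqrt (1 + (α * E) ^ 2) ≤ α * s := by
        have : Real.sqrt (1 + (α * E) ^ 2) ≤ Real.sqrt (α ^ 2 * (1 + E ^ 2)) :=
          Real.sqrt_le_sqrt (by nlinarith)
        rwa [Real.sqrt_mul (by positivity), Real.sqrt_sq (by linarith)] at this
      calc W ≤ (α * s) ^ e := Real.rpow_le_rpow (Real.sqrt_nonneg _) hs1 he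
        _ = α ^ e * s ^ e := Real.mul_rpow (by linarith) hs0
        _ ≤ α ^ ((k : ℝ) - 1) * s ^ e := by
            refine mul_le_mul_of_nonneg_right
              (Real.rpow_le_rpow_of_exponent_le (by linarith) (by rw [hedef]; linarith)) ?_
            positivity
        _ = α ^ (k - 1) * s ^ e := by
            rw [← Real.rpow_natCast α (k - 1), Nat.cast_sub hk1', Nat.cast_one]
    have hMn : 0 ≤ M k := Real.iSup_nonneg fun x => abs_nonneg _
    rw [← hcdef] at hbT
    have step : c * (W * (c⁻¹ ^ k * M k)) ≤ c * ((α ^ (k - 1) * s ^ e) * (c⁻¹ ^ k * M k)) := by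
      refine mul_le_mul_of_nonneg_left (mul_le_mul_of_nonneg_right hWle ?_) hc.le
      have : (0:ℝ) < c⁻¹ ^ k := by positivity
      positivity
    refine hbT.trans (step.trans (le_of_eq ?_))
    obtain ⟨m, rfl⟩ : ∃ m, k = m + 1 := ⟨k - 1, by omega⟩
    have hEpow : E ^ (-((((m:ℕ) + 1 : ℕ) : ℝ) - 1)) = (E ^ m)⁻¹ := by
      rw [show -((((m:ℕ) + 1 : ℕ) : ℝ) - 1) = -(m : ℝ) by push_cast; ring,
        Real.rpow_neg hE.le, Real.rpow_natCast]
    simp only [Nat.add_sub_cancel, pow_succ, hEpow, hMdef]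
    rw [div_eq_mul_inv, mul_pow, ← inv_pow, hcdef, mul_inv, mul_pow]
    have hα0 : α - 1 ≠ 0 := by linarith
    field_simp
  -- assemble
  have hsplit : Finset.range (n + 3) = insert 0 (Finset.Icc 1 (n + 2)) := by
    ext k; simp [Finset.mem_Icc]; omega
  rw [show (∑ k ∈ Finset.range (n + 3),
        ∫ x : ℝ, Real.sqrt (1 + x^2) ^ ((k : ℝ) - p - 1) *
          |iteratedDeriv k (fun x => ξ ((x - E) / ((α - 1) * E))) x|) =
      ∑ k ∈ Finset.range (n + 3), T k from rfl, hsplit,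
    Finset.sum_insert (by simp)]
  have hmidn : ∀ k ∈ Finset.Icc 1 ⌈p⌉₊, 0 ≤ M k / c ^ (k - 1) := by
    intro k _
    exact div_nonneg (Real.iSup_nonneg fun x => abs_nonneg _) (by positivity)
  have hsum : ∑ k ∈ Finset.Icc 1 (n + 2), T k ≤
      (∑ k ∈ Finset.Icc 1 ⌈p⌉₊, M k / c ^ (k - 1))
      + ∑ k ∈ Finset.Icc (⌈p⌉₊ + 1) (n + 2),
          (α / (α - 1)) ^ (k - 1) * Real.sqrt (1 + E^2) ^ ((k : ℝ) - p - 1) *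
            E ^ (-((k : ℝ) - 1)) * M k := by
    rw [← Finset.sum_filter_add_sum_filter_not (Finset.Icc 1 (n + 2)) (· ≤ ⌈p⌉₊) T]
    refine add_le_add ?_ ?_
    · calc ∑ k ∈ (Finset.Icc 1 (n + 2)).filter (· ≤ ⌈p⌉₊), T k
          ≤ ∑ k ∈ (Finset.Icc 1 (n + 2)).filter (· ≤ ⌈p⌉₊), M k / c ^ (k - 1) := by
            refine Finset.sum_le_sum fun k hk => ?_
            rw [Finset.mem_filter, Finset.mem_Icc] at hk
            exact hcase1 k hk.1.1 hk.1.2 hk.2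
        _ ≤ ∑ k ∈ Finset.Icc 1 ⌈p⌉₊, M k / c ^ (k - 1) := by
            refine Finset.sum_le_sum_of_subset_of_nonneg ?_ fun k hk _ => hmidn k hk
            intro k hk
            rw [Finset.mem_filter, Finset.mem_Icc] at hk
            rw [Finset.mem_Icc]
            exact ⟨hk.1.1, hk.2⟩
    · rw [show (Finset.Icc 1 (n + 2)).filter (¬ · ≤ ⌈p⌉₊) = Finset.Icc (⌈p⌉₊ + 1) (n + 2) from by
        ext k; simp [Finset.mem_Icc]; omega]
      refine Finset.sum_le_sum fun k hk => ?_
      rw [Finset.mem_Icc] at hk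
      exact hcase2 k hk.1 hk.2
  calc T 0 + ∑ k ∈ Finset.Icc 1 (n + 2), T k
      ≤ ((∫ x : ℝ, Real.sqrt (1 + x^2) ^ (-p - 1)) * (⨆ x, |ξ x|)) +
        ((∑ k ∈ Finset.Icc 1 ⌈p⌉₊, M k / c ^ (k - 1))
        + ∑ k ∈ Finset.Icc (⌈p⌉₊ + 1) (n + 2),
            (α / (α - 1)) ^ (k - 1) * Real.sqrt (1 + E^2) ^ ((k : ℝ) - p - 1) *
              E ^ (-((k : ℝ) - 1)) * M k) := add_le_add hT0 hsum
    _ = _ := by rw [← add_assoc]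
end

section
/- Let A be a normed ring (e.g. a C*-algebra), let N, M ∈ ℕ with N or M even, and let a₁, …, a_N, b₁, …, b_M ∈ A. Then ‖ [a₁⋯a_N, b₁⋯b_M] ‖ ≤ Σ_{i=1}^N Σ_{j=1}^M ( Π_{k≠i} ‖a_k‖ ) · ( Π_{l≠j} ‖b_l‖ ) · ‖ {a_i, b_j} ‖, where [x,y] := xy − yx and {x,y} := xy + yx. -/
open Finset

section aux

variable {A : Type*} [NormedRing A]

/-- norm of `c` times a product of `ofFn` is bounded by product of norms. -/
private lemma aux1 {n : ℕ} (c : A) (g : Fin n → A) :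
    ‖c * (List.ofFn g).prod‖ ≤ ‖c‖ * ∏ k, ‖g k‖ := by
  have h := List.norm_prod_le' (l := c :: List.ofFn g) (List.cons_ne_nil _ _)
  simpa [List.prod_cons, Fin.prod_ofFn, List.map_ofFn, Function.comp] using h

private lemma eraseZero {n : ℕ} (g : Fin (n + 1) → ℝ) :
    ∏ k ∈ Finset.univ.erase (0 : Fin (n + 1)), g k = ∏ k : Fin n, g k.succ := by
  have h : (Finset.univ.erase (0 : Fin (n + 1))) = Finset.univ.image Fin.succ := by
    ext k
    cases k using Fin.cases <;> simp [Fin.succ_ne_zero]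
  rw [h, Finset.prod_image (fun x _ y _ h => Fin.succ_injective _ h)]

private lemma eraseSucc {n : ℕ} (g : Fin (n + 1) → ℝ) (i : Fin n) :
    ∏ k ∈ Finset.univ.erase (Fin.succ i), g k
      = g 0 * ∏ k ∈ Finset.univ.erase i, g k.succ := by
  have h : (Finset.univ.erase (Fin.succ i))
      = insert (0 : Fin (n+1)) ((Finset.univ.erase i).image Fin.succ) := by
    ext k
    cases k using Fin.cases with
    | zero => simp [(Fin.succ_ne_zero i).symm]
    | succ k => simp [Fin.succ_ne_zero, Fin.succ_injective, (Fin.succ_injective n).eq_iff]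
  rw [h, Finset.prod_insert (by simp [Fin.succ_ne_zero, eq_comm]),
    Finset.prod_image (fun x _ y _ h => Fin.succ_injective _ h)]

/-- even-length product: commutator bounded by anticommutators. -/
private lemma lemB : ∀ (n N : ℕ), N = 2 * n → ∀ (a : Fin N → A) (y : A),
    ‖(List.ofFn a).prod * y - y * (List.ofFn a).prod‖
      ≤ ∑ i : Fin N, (∏ k ∈ Finset.univ.erase i, ‖a k‖) * ‖a i * y + y * a i‖ := by
  intro n
  induction n with
  | zero =>
    intro N hN a y
    subst hN
    simp
  | succ n ih =>
    intro N hN a y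
    match N, hN with
    | (N' + 1 + 1), hN =>
      have hN' : N' = 2 * n := by omega
      set a' : Fin N' → A := fun k => a k.succ.succ with ha'
      have hprod : (List.ofFn a).prod = a 0 * (a 1 * (List.ofFn a').prod) := by
        rw [List.ofFn_succ, List.ofFn_succ]
        simp [ha', Function.comp, List.prod_cons, Fin.succ_zero_eq_one]
      set P := (List.ofFn a').prod with hP
      set Q := ∏ k : Fin N', ‖a' k‖ with hQ
      have key : (List.ofFn a).prod * y - y * (List.ofFn a).prod
          = a 0 * (a 1 * (P * y - y * P))
            + (a 0 * ((a 1 * y + y * a 1) * P) - (a 0 * y + y * a 0) * (a 1 * P)) := by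
        rw [hprod]; noncomm_ring
      have hPy := ih N' hN' a' y
      have b1 : ‖a 0 * (a 1 * (P * y - y * P))‖ ≤ ‖a 0‖ * (‖a 1‖ * ‖P * y - y * P‖) :=
        (norm_mul_le _ _).trans (by gcongr; exact norm_mul_le _ _)
      have b2 : ‖a 0 * ((a 1 * y + y * a 1) * P)‖
          ≤ ‖a 0‖ * (‖a 1 * y + y * a 1‖ * Q) :=
        (norm_mul_le _ _).trans (by gcongr; exact aux1 _ _)
      have b3 : ‖(a 0 * y + y * a 0) * (a 1 * P)‖
          ≤ ‖a 0 * y + y * a 0‖ * (‖a 1‖ * Q) := by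
        have := aux1 (a 0 * y + y * a 0) (Fin.cons (a 1) a' : Fin (N' + 1) → A)
        simpa [List.ofFn_succ, Fin.prod_univ_succ, List.prod_cons, Function.comp,
          mul_assoc] using this
      have lhs_le : ‖(List.ofFn a).prod * y - y * (List.ofFn a).prod‖
          ≤ ‖a 0‖ * (‖a 1‖ * ‖P * y - y * P‖)
            + (‖a 0‖ * (‖a 1 * y + y * a 1‖ * Q) + ‖a 0 * y + y * a 0‖ * (‖a 1‖ * Q)) := by
        rw [key]
        exact (norm_add_le _ _).trans
          (add_le_add b1 ((norm_sub_le _ _).trans (add_le_add b2 b3)))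
      refine lhs_le.trans ?_
      -- now compute the RHS sum
      rw [Fin.sum_univ_succ, Fin.sum_univ_succ]
      have e0 : ∏ k ∈ Finset.univ.erase (0 : Fin (N' + 1 + 1)), ‖a k‖ = ‖a 1‖ * Q := by
        rw [eraseZero (fun k => ‖a k‖), Fin.prod_univ_succ]
        simp [hQ, ha', Fin.succ_zero_eq_one]
      have e1 : ∏ k ∈ Finset.univ.erase ((0 : Fin (N' + 1)).succ), ‖a k‖ = ‖a 0‖ * Q := by
        rw [eraseSucc (fun k => ‖a k‖), eraseZero (fun k => ‖a k.succ‖)]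
      have e2 : ∀ i : Fin N', ∏ k ∈ Finset.univ.erase (Fin.succ (Fin.succ i)), ‖a k‖
          = ‖a 0‖ * (‖a 1‖ * ∏ k ∈ Finset.univ.erase i, ‖a' k‖) := by
        intro i
        rw [eraseSucc (fun k => ‖a k‖), eraseSucc (fun k => ‖a k.succ‖)]
        simp [ha', Fin.succ_zero_eq_one]
      rw [e0, e1]
      have e3 : ∑ i : Fin N',
          (∏ k ∈ Finset.univ.erase (Fin.succ (Fin.succ i)), ‖a k‖)
            * ‖a i.succ.succ * y + y * a i.succ.succ‖
          = ‖a 0‖ * ‖a 1‖ *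
            ∑ i : Fin N', (∏ k ∈ Finset.univ.erase i, ‖a' k‖) * ‖a' i * y + y * a' i‖ := by
        rw [Finset.mul_sum]
        refine Finset.sum_congr rfl fun i _ => ?_
        rw [e2 i]
        simp only [ha']
        ring
      rw [e3, Fin.succ_zero_eq_one]
      have : ‖a 0‖ * (‖a 1‖ * ‖P * y - y * P‖)
          ≤ ‖a 0‖ * ‖a 1‖ *
            ∑ i : Fin N', (∏ k ∈ Finset.univ.erase i, ‖a' k‖) * ‖a' i * y + y * a' i‖ := by
        rw [mul_assoc]
        exact mul_le_mul_of_nonneg_left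
          (mul_le_mul_of_nonneg_left hPy (norm_nonneg _)) (norm_nonneg _)
      nlinarith [this]

/-- Leibniz: commutator with a product, bounded term by term. -/
private lemma lemC : ∀ (M : ℕ) (b : Fin M → A) (x : A),
    ‖x * (List.ofFn b).prod - (List.ofFn b).prod * x‖
      ≤ ∑ j : Fin M, (∏ l ∈ Finset.univ.erase j, ‖b l‖) * ‖x * b j - b j * x‖ := by
  intro M
  induction M with
  | zero => intro b x; simp
  | succ M ih =>
    intro b x
    set b' : Fin M → A := fun k => b k.succ with hb'
    set P := (List.ofFn b').prod with hP
    have hprod : (List.ofFn b).prod = b 0 * P := by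
      rw [List.ofFn_succ]; simp [hb', hP, Function.comp, List.prod_cons]
    have key : x * (List.ofFn b).prod - (List.ofFn b).prod * x
        = (x * b 0 - b 0 * x) * P + b 0 * (x * P - P * x) := by
      rw [hprod]; noncomm_ring
    have b1 : ‖(x * b 0 - b 0 * x) * P‖ ≤ ‖x * b 0 - b 0 * x‖ * ∏ k : Fin M, ‖b' k‖ :=
      aux1 _ _
    have b2 : ‖b 0 * (x * P - P * x)‖ ≤ ‖b 0‖ * ‖x * P - P * x‖ := norm_mul_le _ _
    have lhs_le : ‖x * (List.ofFn b).prod - (List.ofFn b).prod * x‖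
        ≤ ‖x * b 0 - b 0 * x‖ * ∏ k : Fin M, ‖b' k‖ + ‖b 0‖ * ‖x * P - P * x‖ := by
      rw [key]; exact (norm_add_le _ _).trans (by gcongr)
    refine lhs_le.trans ?_
    rw [Fin.sum_univ_succ]
    have e0 : ∏ l ∈ Finset.univ.erase (0 : Fin (M + 1)), ‖b l‖ = ∏ k : Fin M, ‖b' k‖ := by
      rw [eraseZero (fun k => ‖b k‖)]
    have e1 : ∑ j : Fin M, (∏ l ∈ Finset.univ.erase (Fin.succ j), ‖b l‖)
          * ‖x * b j.succ - b j.succ * x‖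
        = ‖b 0‖ * ∑ j : Fin M, (∏ l ∈ Finset.univ.erase j, ‖b' l‖)
          * ‖x * b' j - b' j * x‖ := by
      rw [Finset.mul_sum]
      refine Finset.sum_congr rfl fun j _ => ?_
      rw [eraseSucc (fun k => ‖b k‖)]
      simp only [hb']
      ring
    rw [e0, e1]
    exact add_le_add (le_of_eq (mul_comm _ _))
      (mul_le_mul_of_nonneg_left (ih b' x) (norm_nonneg _))

/-- main inequality in the case `N` even. -/
private lemma mainEven (N M : ℕ) (hN : Even N) (a : Fin N → A) (b : Fin M → A) :
    ‖(List.ofFn a).prod * (List.ofFn b).prod - (List.ofFn b).prod * (List.ofFn a).prod‖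
      ≤ ∑ i : Fin N, ∑ j : Fin M,
          (∏ k ∈ Finset.univ.erase i, ‖a k‖) * (∏ l ∈ Finset.univ.erase j, ‖b l‖) *
            ‖a i * b j + b j * a i‖ := by
  obtain ⟨n, hn⟩ := hN
  have hN2 : N = 2 * n := by omega
  refine (lemC M b ((List.ofFn a).prod)).trans ?_
  rw [Finset.sum_comm]
  refine Finset.sum_le_sum fun j _ => ?_
  have hB := lemB n N hN2 a (b j)
  have : ‖(List.ofFn a).prod * b j - b j * (List.ofFn a).prod‖
      ≤ ∑ i : Fin N, (∏ k ∈ Finset.univ.erase i, ‖a k‖) * ‖a i * b j + b j * a i‖ := hB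
  calc (∏ l ∈ Finset.univ.erase j, ‖b l‖)
        * ‖(List.ofFn a).prod * b j - b j * (List.ofFn a).prod‖
      ≤ (∏ l ∈ Finset.univ.erase j, ‖b l‖)
        * ∑ i : Fin N, (∏ k ∈ Finset.univ.erase i, ‖a k‖) * ‖a i * b j + b j * a i‖ :=
        mul_le_mul_of_nonneg_left this (by positivity)
    _ = ∑ i : Fin N, (∏ k ∈ Finset.univ.erase i, ‖a k‖)
        * (∏ l ∈ Finset.univ.erase j, ‖b l‖) * ‖a i * b j + b j * a i‖ := by
        rw [Finset.mul_sum]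
        exact Finset.sum_congr rfl fun i _ => by ring

end aux

/-- higher commutator estimate in a normed ring, for products of
`N` and `M` factors where `N` or `M` is even. -/
theorem stmt16 {A : Type*} [NormedRing A] (N M : ℕ) (h : Even N ∨ Even M)
    (a : Fin N → A) (b : Fin M → A) :
    ‖(List.ofFn a).prod * (List.ofFn b).prod - (List.ofFn b).prod * (List.ofFn a).prod‖
      ≤ ∑ i : Fin N, ∑ j : Fin M,
          (∏ k ∈ Finset.univ.erase i, ‖a k‖) * (∏ l ∈ Finset.univ.erase j, ‖b l‖) *
            ‖a i * b j + b j * a i‖ := by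
  rcases h with hN | hM
  · exact mainEven N M hN a b
  · rw [norm_sub_rev]
    refine (mainEven M N hM b a).trans ?_
    rw [Finset.sum_comm]
    refine le_of_eq (Finset.sum_congr rfl fun i _ => Finset.sum_congr rfl fun j _ => ?_)
    rw [show b j * a i + a i * b j = a i * b j + b j * a i from add_comm _ _]
    ring
end

section
/- Let A be a normed ring (e.g. a C*-algebra), let N, M ∈ ℕ with both N and M odd, and let a₁, …, a_N, b₁, …, b_M ∈ A. Then ‖ {a₁⋯a_N, b₁⋯b_M} ‖ ≤ Σ_{i=1}^N Σ_{j=1}^M ( Π_{k≠i} ‖a_k‖ ) · ( Π_{l≠j} ‖b_l‖ ) · ‖ {a_i, b_j} ‖, where {x,y} := xy + yx. -/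
open Finset

private lemma prod_erase_eq_succAbove {β : Type*} [CommMonoid β] {n : ℕ}
    (g : Fin (n + 1) → β) (p : Fin (n + 1)) :
    ∏ k ∈ Finset.univ.erase p, g k = ∏ i : Fin n, g (p.succAbove i) := by
  rw [Fin.univ_succAbove n p, Finset.erase_cons, Finset.prod_map]
  rfl

private lemma norm_ofFn_prod_le {A : Type*} [NormedRing A] {n : ℕ} (f : Fin (n + 1) → A) :
    ‖(List.ofFn f).prod‖ ≤ ∏ i, ‖f i‖ := by
  have h1 : (List.ofFn f) ≠ [] := by simp
  refine (List.norm_prod_le' h1).trans_eq ?_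
  rw [List.map_ofFn, List.prod_ofFn]
  rfl

private lemma key {A : Type*} [NormedRing A] (x : A) :
    ∀ (n : ℕ) (f : Fin n → A),
      ‖x * (List.ofFn f).prod - (-1 : A) ^ n * ((List.ofFn f).prod * x)‖
        ≤ ∑ j, (∏ k ∈ Finset.univ.erase j, ‖f k‖) * ‖x * f j + f j * x‖ := by
  intro n
  induction n with
  | zero => intro f; simp
  | succ n ih =>
    match n, ih with
    | 0, _ =>
      intro f
      have h0 : x * (List.ofFn f).prod - (-1 : A) ^ 1 * ((List.ofFn f).prod * x)
          = x * f 0 + f 0 * x := by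
        have : (List.ofFn f).prod = f 0 := by simp [List.ofFn_succ]
        rw [this, pow_one]
        noncomm_ring
      rw [h0, Fin.sum_univ_succ]
      simp
    | (m + 1), ih =>
      intro f
      have hof : (List.ofFn f).prod
          = f 0 * (List.ofFn (fun i : Fin (m + 1) => f i.succ)).prod := by
        rw [List.ofFn_succ, List.prod_cons]
      obtain ⟨P, hP⟩ : ∃ P, (List.ofFn (fun i : Fin (m + 1) => f i.succ)).prod = P := ⟨_, rfl⟩
      rw [hP] at hof
      obtain ⟨c, hc⟩ : ∃ c, (-1 : A) ^ (m + 1) = c := ⟨_, rfl⟩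
      have hcsucc : (-1 : A) ^ (m + 1 + 1) = c * (-1) := by rw [pow_succ, hc]
      have hid : x * (f 0 * P) - (-1 : A) ^ (m + 1 + 1) * (f 0 * P * x)
          = (x * f 0 + f 0 * x) * P - f 0 * (x * P - (-1 : A) ^ (m + 1) * (P * x)) := by
        have hcf : c * f 0 = f 0 * c := by
          rw [← hc]; exact ((Commute.neg_one_left (f 0)).pow_left _).eq
        rw [hcsucc, hc]
        noncomm_ring
        simp only [← mul_assoc]
        rw [hcf]
      rw [hof, hid]
      have h2 : ‖(x * f 0 + f 0 * x) * P - f 0 * (x * P - (-1 : A) ^ (m + 1) * (P * x))‖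
          ≤ ‖x * f 0 + f 0 * x‖ * ‖P‖ + ‖f 0‖ * ‖x * P - (-1 : A) ^ (m + 1) * (P * x)‖ :=
        (norm_sub_le _ _).trans (add_le_add (norm_mul_le _ _) (norm_mul_le _ _))
      refine h2.trans ?_
      rw [Fin.sum_univ_succ]
      have hPle : ‖P‖ ≤ ∏ i : Fin (m + 1), ‖f i.succ‖ := by
        rw [← hP]; exact norm_ofFn_prod_le _
      have hterm0 : (∏ k ∈ Finset.univ.erase (0 : Fin (m + 1 + 1)), ‖f k‖)
          = ∏ i : Fin (m + 1), ‖f i.succ‖ := by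
        rw [prod_erase_eq_succAbove]
        simp [Fin.succAbove_zero]
      have htermj : ∀ j : Fin (m + 1), (∏ k ∈ Finset.univ.erase (j.succ), ‖f k‖)
          = ‖f 0‖ * ∏ k ∈ Finset.univ.erase j, ‖f k.succ‖ := by
        intro j
        rw [prod_erase_eq_succAbove, prod_erase_eq_succAbove, Fin.prod_univ_succ]
        simp [Fin.succ_succAbove_zero, Fin.succ_succAbove_succ]
      have hsum := ih (fun i : Fin (m + 1) => f i.succ)
      rw [hP] at hsum
      refine add_le_add ?_ ?_
      · rw [hterm0, mul_comm]
        exact mul_le_mul_of_nonneg_right hPle (norm_nonneg _)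
      · calc ‖f 0‖ * ‖x * P - (-1 : A) ^ (m + 1) * (P * x)‖
            ≤ ‖f 0‖ * ∑ j, (∏ k ∈ Finset.univ.erase j, ‖(fun i : Fin (m + 1) => f i.succ) k‖) *
              ‖x * f j.succ + f j.succ * x‖ :=
              mul_le_mul_of_nonneg_left hsum (norm_nonneg _)
        _ = ∑ j : Fin (m + 1), (∏ k ∈ Finset.univ.erase (j.succ), ‖f k‖) *
              ‖x * f j.succ + f j.succ * x‖ := by
              rw [Finset.mul_sum]
              refine Finset.sum_congr rfl fun j _ => ?_
              rw [htermj j]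
              ring

/-- higher anticommutator estimate in a normed ring, for products of
`N` and `M` factors where both `N` and `M` are odd. -/
theorem stmt17 {A : Type*} [NormedRing A] (N M : ℕ) (hN : Odd N) (hM : Odd M)
    (a : Fin N → A) (b : Fin M → A) :
    ‖(List.ofFn a).prod * (List.ofFn b).prod + (List.ofFn b).prod * (List.ofFn a).prod‖
      ≤ ∑ i : Fin N, ∑ j : Fin M,
          (∏ k ∈ Finset.univ.erase i, ‖a k‖) * (∏ l ∈ Finset.univ.erase j, ‖b l‖) *
            ‖a i * b j + b j * a i‖ := by
  set LA := (List.ofFn a).prod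
  set LB := (List.ofFn b).prod
  have hMA : (-1 : A) ^ M = -1 := hM.neg_one_pow
  have hNA : (-1 : A) ^ N = -1 := hN.neg_one_pow
  have step1 : ‖LA * LB + LB * LA‖
      ≤ ∑ j, (∏ l ∈ Finset.univ.erase j, ‖b l‖) * ‖LA * b j + b j * LA‖ := by
    have h := key LA M b
    rw [hMA, neg_mul, one_mul, sub_neg_eq_add] at h
    exact h
  have step2 : ∀ j : Fin M, ‖LA * b j + b j * LA‖
      ≤ ∑ i, (∏ k ∈ Finset.univ.erase i, ‖a k‖) * ‖a i * b j + b j * a i‖ := by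
    intro j
    have h := key (b j) N a
    rw [hNA, neg_mul, one_mul, sub_neg_eq_add] at h
    rw [add_comm (LA * b j)]
    exact h.trans (le_of_eq (Finset.sum_congr rfl fun i _ => by rw [add_comm (b j * a i)]))
  calc ‖LA * LB + LB * LA‖
      ≤ ∑ j, (∏ l ∈ Finset.univ.erase j, ‖b l‖) * ‖LA * b j + b j * LA‖ := step1
    _ ≤ ∑ j, (∏ l ∈ Finset.univ.erase j, ‖b l‖) *
          ∑ i, (∏ k ∈ Finset.univ.erase i, ‖a k‖) * ‖a i * b j + b j * a i‖ :=
        Finset.sum_le_sum fun j _ => mul_le_mul_of_nonneg_left (step2 j)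
          (Finset.prod_nonneg fun _ _ => norm_nonneg _)
    _ = ∑ i : Fin N, ∑ j : Fin M,
          (∏ k ∈ Finset.univ.erase i, ‖a k‖) * (∏ l ∈ Finset.univ.erase j, ‖b l‖) *
            ‖a i * b j + b j * a i‖ := by
        simp_rw [Finset.mul_sum]
        rw [Finset.sum_comm]
        exact Finset.sum_congr rfl fun i _ => Finset.sum_congr rfl fun j _ => by ring
end
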